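/- Let $(p_j)$ be a positive non-increasing sequence tending to $0$ and let $k$ be a positive integer. Then the following are equivalent: (a) there is $x_0 > 0$ such that $\#\{j : x/2 < p_j \le x\} \ge k$ for all $0 < x < x_0$; (b) there is $j_0$ such that $p_{j+k} \ge p_j/2$ for all $j \ge j_0$. -/

import Mathlib

open Real Set Filter

theorem stmt11 (p : ℕ → ℝ) (hpos : ∀ j, 0 < p j) (hmono : ∀ j, p (j + 1) ≤ p j)
    (hlim : Tendsto p atTop (nhds 0)) (k : ℕ) (hk : 0 < k) :
    (∃ x₀ : ℝ, 0 < x₀ ∧ ∀ x : ℝ, 0 < x → x < x₀ →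
        k ≤ ({j : ℕ | x / 2 < p j ∧ p j ≤ x}).ncard) ↔
    (∃ j₀ : ℕ, ∀ j : ℕ, j₀ ≤ j → p j / 2 ≤ p (j + k)) := by
  classical
  have hA : Antitone p := antitone_nat_of_succ_le hmono
  have hsmall : ∀ ε : ℝ, 0 < ε → ∃ N, ∀ i ≥ N, p i < ε := by
    intro ε hε
    exact Filter.eventually_atTop.mp (hlim.eventually (gt_mem_nhds hε))
  constructor
  · rintro ⟨x₀, hx₀, h⟩
    obtain ⟨N, hN⟩ := hsmall x₀ hx₀
    refine ⟨N, fun j hj => ?_⟩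
    by_contra hcon
    push_neg at hcon
    have he : ∃ i, p i < p j := by
      obtain ⟨N', hN'⟩ := hsmall (p j) (hpos j)
      exact ⟨N', hN' N' le_rfl⟩
    obtain ⟨m, hm, hmin⟩ : ∃ m, p m < p j ∧ ∀ i < m, ¬ p i < p j :=
      ⟨Nat.find he, Nat.find_spec he, fun i hi => Nat.find_min he hi⟩
    have hmj : j < m := by
      by_contra hle
      push_neg at hle
      exact absurd hm (not_lt.mpr (hA hle))
    obtain ⟨n, rfl⟩ : ∃ n, m = n + 1 := ⟨m - 1, by omega⟩
    have hn : j ≤ n := by omega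
    have hpn : p n = p j := le_antisymm (hA hn) (not_lt.mp (hmin n (by omega)))
    set x := max (p (n + 1)) (2 * p (n + k)) with hxdef
    have hx_pos : 0 < x := (hpos (n + 1)).trans_le (le_max_left _ _)
    have hnk : p (n + k) ≤ p (j + k) := hA (by omega)
    have hx_lt : x < p n := by
      apply max_lt
      · rw [hpn]; exact hm
      · rw [hpn]; linarith
    have hx_lt_x₀ : x < x₀ := hx_lt.trans (hN n (by omega))
    have hcard := h x hx_pos hx_lt_x₀
    have hsub : {i : ℕ | x / 2 < p i ∧ p i ≤ x} ⊆ Set.Ioo n (n + k) := by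
      rintro i ⟨h1, h2⟩
      constructor
      · by_contra hle
        push_neg at hle
        exact absurd (h2.trans_lt hx_lt) (not_lt.mpr (hA hle))
      · by_contra hge
        push_neg at hge
        have : p i ≤ p (n + k) := hA hge
        have hx2 : p (n + k) ≤ x / 2 := by
          have := le_max_right (p (n + 1)) (2 * p (n + k))
          linarith
        linarith
    have hfin : (Set.Ioo n (n + k)).Finite := Set.finite_Ioo _ _
    have hle : ({i : ℕ | x / 2 < p i ∧ p i ≤ x}).ncard ≤ (Set.Ioo n (n + k)).ncard :=
      Set.ncard_le_ncard hsub hfin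
    have hval : (Set.Ioo n (n + k)).ncard = k - 1 := by
      rw [show (Set.Ioo n (n + k)) = ↑(Finset.Ioo n (n + k)) by simp,
        Set.ncard_coe_finset, Nat.card_Ioo]
      omega
    omega
  · rintro ⟨j₀, h⟩
    refine ⟨p j₀, hpos j₀, fun x hx hxlt => ?_⟩
    have he : ∃ i, p i ≤ x := by
      obtain ⟨N', hN'⟩ := hsmall x hx
      exact ⟨N', (hN' N' le_rfl).le⟩
    obtain ⟨m, hm, hmin⟩ : ∃ m, p m ≤ x ∧ ∀ i < m, ¬ p i ≤ x :=
      ⟨Nat.find he, Nat.find_spec he, fun i hi => Nat.find_min he hi⟩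
    have hmj : j₀ < m := by
      by_contra hle
      push_neg at hle
      exact absurd (hm.trans_lt hxlt) (not_lt.mpr (hA hle))
    obtain ⟨n, rfl⟩ : ∃ n, m = n + 1 := ⟨m - 1, by omega⟩
    have hn : j₀ ≤ n := by omega
    have hxn : x < p n := not_le.mp (hmin n (by omega))
    have hsub : ↑(Finset.Ico (n + 1) (n + 1 + k)) ⊆ {i : ℕ | x / 2 < p i ∧ p i ≤ x} := by
      intro i hi
      simp only [Finset.coe_Ico, Set.mem_Ico] at hi
      refine ⟨?_, (hA hi.1).trans hm⟩
      have h2 : p (n + k) ≥ p n / 2 := h n hn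
      have h3 : p i ≥ p (n + k) := hA (by omega)
      linarith
    obtain ⟨N', hN'⟩ := hsmall (x / 2) (by positivity)
    have hfin : ({i : ℕ | x / 2 < p i ∧ p i ≤ x}).Finite := by
      apply (Set.finite_Iio N').subset
      rintro i ⟨h1, _⟩
      by_contra hge
      simp only [Set.mem_Iio, not_lt] at hge
      exact absurd h1 (not_lt.mpr (hN' i hge).le)
    calc k = (Finset.Ico (n + 1) (n + 1 + k)).card := by rw [Nat.card_Ico]; omega
      _ = (↑(Finset.Ico (n + 1) (n + 1 + k)) : Set ℕ).ncard := (Set.ncard_coe_finset _).symm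
      _ ≤ _ := Set.ncard_le_ncard hsub hfin
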